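/- Let f(z₁,…,z_m) = ∏ᵢ zᵢ^{−pᵢ} with pᵢ > 0 on the positive orthant, and let M_k be the k×k upper-left submatrix of the Hessian of f. Then det M_k = (1 + ∑_{i≤k} pᵢ) · ∏_{i≤k} pᵢ · f(z)^k · ∏_{i≤k} zᵢ^{−2}. In particular, det M_k > 0 on the positive orthant for each k = 1,…,m. -/

import Mathlib

open Finset


lemma auxU {m : ℕ} {w : Fin m → ℝ} (hw : ∀ i, 0 < w i) :
    {u : Fin m → ℝ | ∀ i, 0 < u i} ∈ nhds w := by
  have ho : IsOpen {u : Fin m → ℝ | ∀ i, 0 < u i} := by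
    have : {u : Fin m → ℝ | ∀ i, 0 < u i} = ⋂ i, {u | 0 < u i} := by
      ext u; simp [Set.mem_iInter]
    rw [this]
    exact isOpen_iInter_of_finite fun i =>
      isOpen_lt continuous_const (continuous_apply i)
  exact ho.mem_nhds hw

lemma aux1 {m : ℕ} (p : Fin m → ℝ) {w : Fin m → ℝ} (hw : ∀ i, 0 < w i) :
    HasFDerivAt (fun u : Fin m → ℝ => ∏ l, u l ^ (-(p l)))
      ((∏ l, w l ^ (-(p l))) • ∑ l, ((-(p l)) * (w l)⁻¹) • (ContinuousLinearMap.proj l : (Fin m → ℝ) →L[ℝ] ℝ)) w := by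
  have hsum : HasFDerivAt (fun u : Fin m → ℝ => ∑ l, (-(p l)) * Real.log (u l))
      (∑ l, ((-(p l)) * (w l)⁻¹) • (ContinuousLinearMap.proj l : (Fin m → ℝ) →L[ℝ] ℝ)) w := by
    refine HasFDerivAt.fun_sum fun l _ => ?_
    have hproj : HasFDerivAt (fun u : Fin m → ℝ => u l)
        ((ContinuousLinearMap.proj l : (Fin m → ℝ) →L[ℝ] ℝ)) w := (ContinuousLinearMap.proj l : (Fin m → ℝ) →L[ℝ] ℝ).hasFDerivAt
    have hlog := (Real.hasDerivAt_log (hw l).ne').comp_hasFDerivAt w hproj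
    have h2 := hlog.const_mul (-(p l))
    rw [smul_smul] at h2
    exact h2
  have hF := (Real.hasDerivAt_exp (∑ l, (-(p l)) * Real.log (w l))).comp_hasFDerivAt w hsum
  have heq : (fun u : Fin m → ℝ => ∏ l, u l ^ (-(p l))) =ᶠ[nhds w]
      (fun u => Real.exp (∑ l, (-(p l)) * Real.log (u l))) := by
    filter_upwards [auxU hw] with u hu
    rw [Real.exp_sum]
    exact Finset.prod_congr rfl fun l _ => by
      rw [Real.rpow_def_of_pos (hu l), mul_comm]
  have hval : Real.exp (∑ l, (-(p l)) * Real.log (w l)) = ∏ l, w l ^ (-(p l)) := by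
    rw [Real.exp_sum]
    exact Finset.prod_congr rfl fun l _ => by
      rw [Real.rpow_def_of_pos (hw l), mul_comm]
  have h := hF.congr_of_eventuallyEq heq
  rw [hval] at h
  simpa [Function.comp] using h

lemma aux2 {m : ℕ} (p : Fin m → ℝ) {w : Fin m → ℝ} (hw : ∀ i, 0 < w i) (j : Fin m) :
    fderiv ℝ (fun u : Fin m → ℝ => ∏ l, u l ^ (-(p l))) w (Pi.single j 1)
      = (∏ l, w l ^ (-(p l))) * ((-(p j)) * (w j)⁻¹) := by
  rw [(aux1 p hw).fderiv]
  simp only [ContinuousLinearMap.smul_apply, ContinuousLinearMap.sum_apply,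
    ContinuousLinearMap.smul_apply, ContinuousLinearMap.proj_apply, smul_eq_mul]
  congr 1
  rw [Finset.sum_eq_single j]
  · simp
  · intro l _ hl
    simp [Pi.single_apply, hl]
  · simp

lemma aux3 {m : ℕ} (p : Fin m → ℝ) {z : Fin m → ℝ} (hz : ∀ i, 0 < z i) (a b : Fin m) :
    fderiv ℝ (fun w => fderiv ℝ (fun u : Fin m → ℝ => ∏ l, u l ^ (-(p l))) w (Pi.single b 1)) z
      (Pi.single a 1)
    = (∏ l, z l ^ (-(p l))) * ((p a * (z a)⁻¹) * (p b * (z b)⁻¹))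
      + (if a = b then (∏ l, z l ^ (-(p l))) * (p a * ((z a)⁻¹ * (z a)⁻¹)) else 0) := by
  have hev : (fun w => fderiv ℝ (fun u : Fin m → ℝ => ∏ l, u l ^ (-(p l))) w (Pi.single b 1))
      =ᶠ[nhds z] fun w => (∏ l, w l ^ (-(p l))) * ((-(p b)) * (w b)⁻¹) := by
    filter_upwards [auxU hz] with w hw
    exact aux2 p hw b
  rw [hev.fderiv_eq]
  have hc : HasFDerivAt (fun w : Fin m → ℝ => (-(p b)) * (w b)⁻¹)
      ((-(p b)) • ((-((z b) ^ 2)⁻¹) • (ContinuousLinearMap.proj b : (Fin m → ℝ) →L[ℝ] ℝ))) z := by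
    have h1 := (hasDerivAt_inv (hz b).ne').comp_hasFDerivAt z
      (ContinuousLinearMap.proj b : (Fin m → ℝ) →L[ℝ] ℝ).hasFDerivAt
    exact h1.const_mul (-(p b))
  have hmul := HasFDerivAt.fun_mul (aux1 p hz) hc
  rw [hmul.fderiv]
  simp only [ContinuousLinearMap.add_apply, ContinuousLinearMap.smul_apply,
    ContinuousLinearMap.sum_apply, ContinuousLinearMap.proj_apply, smul_eq_mul]
  have hsum : (∑ l, ((-(p l)) * (z l)⁻¹) * Pi.single (M := fun _ : Fin m => ℝ) a 1 l) = (-(p a)) * (z a)⁻¹ := by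
    rw [Finset.sum_eq_single a]
    · simp
    · intro l _ hl; simp [Pi.single_apply, hl]
    · simp
  rw [hsum]
  rcases eq_or_ne a b with h | h
  · subst h
    simp only [Pi.single_eq_same, if_true]
    have : (z a) ≠ 0 := (hz a).ne'
    field_simp
    ring
  · rw [if_neg h, Pi.single_eq_of_ne (fun hh => h hh.symm)]
    ring


/-- Determinant of the upper-left k×k minor of the Hessian of f(z) = ∏ zᵢ^{-pᵢ}:
det M_k = (1 + ∑_{i≤k} pᵢ) ∏_{i≤k} pᵢ · f(z)^k · ∏_{i≤k} zᵢ^{-2}, and it is positive. -/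
theorem stmt8 (m : ℕ) (hm : 1 ≤ m) (p : Fin m → ℝ) (hp : ∀ i, 0 < p i)
    (z : Fin m → ℝ) (hz : ∀ i, 0 < z i) (k : ℕ) (hk1 : 1 ≤ k) (hk : k ≤ m) :
    (Matrix.of fun i j : Fin k =>
        fderiv ℝ (fun w =>
          fderiv ℝ (fun u : Fin m → ℝ => ∏ l, u l ^ (-(p l))) w
            (Pi.single (Fin.castLE hk j) 1)) z (Pi.single (Fin.castLE hk i) 1)).det
      = (1 + ∑ i : Fin k, p (Fin.castLE hk i)) * (∏ i : Fin k, p (Fin.castLE hk i))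
          * (∏ l, z l ^ (-(p l))) ^ k * (∏ i : Fin k, z (Fin.castLE hk i) ^ (-2 : ℝ))
    ∧ 0 < (Matrix.of fun i j : Fin k =>
        fderiv ℝ (fun w =>
          fderiv ℝ (fun u : Fin m → ℝ => ∏ l, u l ^ (-(p l))) w
            (Pi.single (Fin.castLE hk j) 1)) z (Pi.single (Fin.castLE hk i) 1)).det := by
  set F : ℝ := ∏ l, z l ^ (-(p l)) with hFdef
  have hFpos : 0 < F := Finset.prod_pos fun l _ => Real.rpow_pos_of_pos (hz l) _
  set c : Fin k → Fin m := Fin.castLE hk with hcdef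
  have hM : (Matrix.of fun i j : Fin k =>
        fderiv ℝ (fun w =>
          fderiv ℝ (fun u : Fin m → ℝ => ∏ l, u l ^ (-(p l))) w
            (Pi.single (Fin.castLE hk j) 1)) z (Pi.single (Fin.castLE hk i) 1))
      = F • (Matrix.diagonal (fun i : Fin k => p (c i) * ((z (c i))⁻¹ * (z (c i))⁻¹)) *
          (1 + Matrix.replicateCol Unit (fun i : Fin k => z (c i)) *
            Matrix.replicateRow Unit (fun i : Fin k => p (c i) * (z (c i))⁻¹))) := by
    ext i j
    rw [Matrix.of_apply, aux3 p hz]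
    have hcast : (c i = c j) ↔ i = j := by
      constructor
      · intro h; exact Fin.castLE_injective hk h
      · intro h; rw [h]
    simp only [Matrix.smul_apply, Matrix.mul_apply, Matrix.diagonal_apply, Matrix.add_apply,
      Matrix.one_apply, Matrix.replicateCol_apply, Matrix.replicateRow_apply, smul_eq_mul, Finset.sum_ite_eq,
      Finset.mem_univ, if_true, Fintype.sum_unique]
    simp only [ite_mul, zero_mul, Finset.sum_ite_eq, Finset.mem_univ, if_true]
    simp only [← hcdef, hcast]
    have hne : z (c i) ≠ 0 := (hz _).ne'
    have hne2 : z (c j) ≠ 0 := (hz _).ne'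
    simp only [← hFdef]
    rcases eq_or_ne i j with h | h
    · subst h
      simp only [if_true]
      field_simp
      ring
    · simp only [if_neg h]
      field_simp
      ring
  have hdot : dotProduct (fun i : Fin k => p (c i) * (z (c i))⁻¹)
      (fun i : Fin k => z (c i)) = ∑ i : Fin k, p (c i) := by
    unfold dotProduct
    refine Finset.sum_congr rfl fun i _ => ?_
    have hne : z (c i) ≠ 0 := (hz _).ne'
    field_simp
  have hprod : (∏ i : Fin k, z (c i) ^ (-2:ℝ))
      = ∏ i : Fin k, ((z (c i))⁻¹ * (z (c i))⁻¹) := by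
    refine Finset.prod_congr rfl fun i _ => ?_
    rw [show (-2:ℝ) = ((-2 : ℤ) : ℝ) by norm_num, Real.rpow_intCast, zpow_neg,
      zpow_two, mul_inv]
  have hdet : (Matrix.of fun i j : Fin k =>
        fderiv ℝ (fun w =>
          fderiv ℝ (fun u : Fin m → ℝ => ∏ l, u l ^ (-(p l))) w
            (Pi.single (Fin.castLE hk j) 1)) z (Pi.single (Fin.castLE hk i) 1)).det
      = (1 + ∑ i : Fin k, p (Fin.castLE hk i)) * (∏ i : Fin k, p (Fin.castLE hk i))
          * F ^ k * (∏ i : Fin k, z (Fin.castLE hk i) ^ (-2 : ℝ)) := by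
    rw [hM, Matrix.det_smul, Matrix.det_mul, Matrix.det_diagonal,
      Matrix.det_one_add_replicateCol_mul_replicateRow, hdot, Fintype.card_fin]
    simp only [← hcdef]
    rw [hprod, Finset.prod_mul_distrib]
    ring
  refine ⟨hdet, ?_⟩
  rw [hdet]
  have h1 : 0 < 1 + ∑ i : Fin k, p (Fin.castLE hk i) :=
    add_pos_of_pos_of_nonneg one_pos (Finset.sum_nonneg fun i _ => (hp _).le)
  have h2 : 0 < ∏ i : Fin k, p (Fin.castLE hk i) := Finset.prod_pos fun i _ => hp _
  have h3 : 0 < F ^ k := pow_pos hFpos k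
  have h4 : 0 < ∏ i : Fin k, z (Fin.castLE hk i) ^ (-2:ℝ) :=
    Finset.prod_pos fun i _ => Real.rpow_pos_of_pos (hz _) _
  exact mul_pos (mul_pos (mul_pos h1 h2) h3) h4
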